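/- arXiv:1304.6271 — 2 statements merged into one kernel-verified Lean document; each statement's English description precedes it below -/
import Mathlib

section
/- For each fixed t > 0 the function ρ_t defined by ρ_t(x,y) = 1/p(t,x,y) for x ≠ y and ρ_t(x,x) = 0 is an ultra-metric on X: it is finite and non-negative, symmetric, vanishes exactly on the diagonal, and satisfies ρ_t(x,y) ≤ max{ρ_t(x,z), ρ_t(z,y)} for all x,y,z ∈ X. -/
open MeasureTheory Metric Filter
open scoped ENNReal Classical

/-- The averaging operator `Q_r f(x) = μ(B_r(x))⁻¹ ∫_{B_r(x)} f dμ`. -/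
noncomputable def avgOp {X : Type*} [MetricSpace X] [MeasurableSpace X]
    (μ : Measure X) (r : ℝ) (f : X → ℝ) (x : X) : ℝ :=
  (μ (closedBall x r)).toReal⁻¹ * ∫ y in closedBall x r, f y ∂μ

/-- The isotropic Markov operator `P^t f(x) = ∫_[0,∞) Q_r f(x) dσ^t(r)`,
where `νt` is the Lebesgue–Stieltjes measure of `σ^t`. -/
noncomputable def isoOp {X : Type*} [MetricSpace X] [MeasurableSpace X]
    (μ : Measure X) (νt : Measure ℝ) (f : X → ℝ) (x : X) : ℝ :=
  ∫ r in Set.Ici (0:ℝ), avgOp μ r f x ∂νt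

/-- The heat kernel `p(t,x,y) = ∫_[d(x,y),∞) μ(B_r(x))⁻¹ dσ^t(r)`. -/
noncomputable def heatK {X : Type*} [MetricSpace X] [MeasurableSpace X]
    (μ : Measure X) (ν : ℝ → Measure ℝ) (t : ℝ) (x y : X) : ℝ≥0∞ :=
  ∫⁻ r in Set.Ici (dist x y), (μ (closedBall x r))⁻¹ ∂(ν t)

/-- The intrinsic ultra-metric `d_*(x,y) = 1/log(1/σ(d(x,y)))` for `x ≠ y`. -/
noncomputable def dstar {X : Type*} [MetricSpace X] (σ : ℝ → ℝ) (x y : X) : ℝ :=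
  if x = y then 0 else 1 / Real.log (1 / σ (dist x y))

/-- The closed ball `B*_s(x)` of the intrinsic ultra-metric. -/
def starBall {X : Type*} [MetricSpace X] (σ : ℝ → ℝ) (x : X) (s : ℝ) : Set X :=
  {y | dstar σ x y ≤ s}

/-- The spectral distribution function `N(x,τ) = 1/μ(B*_{1/τ}(x))`. -/
noncomputable def specN {X : Type*} [MetricSpace X] [MeasurableSpace X]
    (μ : Measure X) (σ : ℝ → ℝ) (x : X) (τ : ℝ) : ℝ≥0∞ :=
  (μ (starBall σ x (1 / τ)))⁻¹

/-- The Green function `g(x,y) = ∫_0^∞ p(t,x,y) dt`. -/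
noncomputable def greenF {X : Type*} [MetricSpace X] [MeasurableSpace X]
    (μ : Measure X) (ν : ℝ → Measure ℝ) (x y : X) : ℝ≥0∞ :=
  ∫⁻ t in Set.Ioi (0:ℝ), heatK μ ν t x y

section Aux

variable {X : Type*} [MetricSpace X] [MeasurableSpace X]

lemma ultra_ball_eq (hd : ∀ x y z : X, dist x z ≤ max (dist x y) (dist y z))
    {x y : X} {r : ℝ} (h : dist x y ≤ r) : closedBall x r = closedBall y r := by
  have key : ∀ u v : X, dist u v ≤ r → closedBall u r ⊆ closedBall v r := by
    intro u v huv z hz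
    simp only [mem_closedBall, dist_comm] at hz ⊢
    calc dist v z ≤ max (dist v u) (dist u z) := hd v u z
    _ ≤ r := max_le (by rwa [dist_comm]) hz
  exact le_antisymm (key x y h) (key y x (by rwa [dist_comm] at h))

lemma heatK_symm (hd : ∀ x y z : X, dist x z ≤ max (dist x y) (dist y z))
    (μ : Measure X) (ν : ℝ → Measure ℝ) (t : ℝ) (x y : X) :
    heatK μ ν t x y = heatK μ ν t y x := by
  unfold heatK
  rw [dist_comm y x]
  refine setLIntegral_congr_fun measurableSet_Ici ?_
  intro r hr
  simp only []; rw [ultra_ball_eq hd (Set.mem_Ici.mp hr)]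

lemma nu_Ici_le_one {σ : ℝ → ℝ}
    (hσrange : ∀ r : ℝ, 0 ≤ r → σ r ∈ Set.Icc (0:ℝ) 1)
    {ν : ℝ → Measure ℝ} {t : ℝ} (ht : 0 < t)
    (hν : ∀ t : ℝ, 0 < t → ∀ a b : ℝ, 0 ≤ a → a ≤ b →
      ν t (Set.Ico a b) = ENNReal.ofReal (σ b ^ t - σ a ^ t))
    {d : ℝ} (hd0 : 0 ≤ d) : ν t (Set.Ici d) ≤ 1 := by
  have hun : Set.Ici d = ⋃ n : ℕ, Set.Ico d (d + n) := by
    ext r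
    simp only [Set.mem_Ici, Set.mem_iUnion, Set.mem_Ico]
    constructor
    · intro hr
      obtain ⟨n, hn⟩ := exists_nat_gt (r - d)
      exact ⟨n, hr, by linarith⟩
    · rintro ⟨n, hn, _⟩; exact hn
  have hmono : Monotone (fun n : ℕ => Set.Ico d (d + n)) := by
    intro m n hmn
    exact Set.Ico_subset_Ico le_rfl (by gcongr)
  rw [hun, hmono.measure_iUnion]
  refine iSup_le fun n => ?_
  have hn0 : (0:ℝ) ≤ d + n := by linarith [Nat.cast_nonneg (α := ℝ) n]
  rw [hν t ht d (d + n) hd0 (by linarith [Nat.cast_nonneg (α := ℝ) n])]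
  rw [show (1:ℝ≥0∞) = ENNReal.ofReal 1 by simp]
  refine ENNReal.ofReal_le_ofReal ?_
  have h1 := hσrange (d + n) hn0
  have h2 := hσrange d hd0
  have : σ (d + n) ^ t ≤ 1 := Real.rpow_le_one h1.1 h1.2 ht.le
  have : 0 ≤ σ d ^ t := Real.rpow_nonneg h2.1 t
  linarith

lemma heatK_lt_top
    (μ : Measure X)
    (hμpos : ∀ (x : X) (r : ℝ), 0 < r → 0 < μ (closedBall x r))
    {σ : ℝ → ℝ}
    (hσrange : ∀ r : ℝ, 0 ≤ r → σ r ∈ Set.Icc (0:ℝ) 1)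
    {ν : ℝ → Measure ℝ} {t : ℝ} (ht : 0 < t)
    (hν : ∀ t : ℝ, 0 < t → ∀ a b : ℝ, 0 ≤ a → a ≤ b →
      ν t (Set.Ico a b) = ENNReal.ofReal (σ b ^ t - σ a ^ t))
    {x y : X} (hxy : x ≠ y) : heatK μ ν t x y < ⊤ := by
  set d := dist x y with hddef
  have hd0 : 0 < d := dist_pos.mpr hxy
  have hbd : heatK μ ν t x y ≤ (μ (closedBall x d))⁻¹ * ν t (Set.Ici d) := by
    rw [← setLIntegral_const]
    refine setLIntegral_mono' measurableSet_Ici fun r hr => ?_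
    exact ENNReal.inv_le_inv' (measure_mono (closedBall_subset_closedBall hr))
  refine lt_of_le_of_lt hbd ?_
  have h1 : (μ (closedBall x d))⁻¹ < ⊤ := by
    simp [ENNReal.inv_lt_top, (hμpos x d hd0)]
  have h2 : ν t (Set.Ici d) ≤ 1 := nu_Ici_le_one hσrange ht hν hd0.le
  exact ENNReal.mul_lt_top h1 (lt_of_le_of_lt h2 ENNReal.one_lt_top)

lemma heatK_pos
    (μ : Measure X)
    (hμfin : ∀ (x : X) (r : ℝ), 0 < r → μ (closedBall x r) < ⊤)
    {σ : ℝ → ℝ}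
    (hσmono : StrictMonoOn σ (Set.Ici 0))
    (hσrange : ∀ r : ℝ, 0 ≤ r → σ r ∈ Set.Icc (0:ℝ) 1)
    {ν : ℝ → Measure ℝ} {t : ℝ} (ht : 0 < t)
    (hν : ∀ t : ℝ, 0 < t → ∀ a b : ℝ, 0 ≤ a → a ≤ b →
      ν t (Set.Ico a b) = ENNReal.ofReal (σ b ^ t - σ a ^ t))
    {x y : X} (hxy : x ≠ y) : 0 < heatK μ ν t x y := by
  set d := dist x y with hddef
  have hd0 : 0 < d := dist_pos.mpr hxy
  have hbd : (μ (closedBall x (d + 1)))⁻¹ * ν t (Set.Ico d (d + 1)) ≤ heatK μ ν t x y := by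
    calc (μ (closedBall x (d + 1)))⁻¹ * ν t (Set.Ico d (d + 1))
        = ∫⁻ _ in Set.Ico d (d + 1), (μ (closedBall x (d + 1)))⁻¹ ∂(ν t) :=
          (setLIntegral_const _ _).symm
      _ ≤ ∫⁻ r in Set.Ico d (d + 1), (μ (closedBall x r))⁻¹ ∂(ν t) := by
          refine setLIntegral_mono' measurableSet_Ico fun r hr => ?_
          exact ENNReal.inv_le_inv' (measure_mono (closedBall_subset_closedBall hr.2.le))
      _ ≤ heatK μ ν t x y := lintegral_mono_set Set.Ico_subset_Ici_self
  refine lt_of_lt_of_le ?_ hbd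
  have h1 : 0 < (μ (closedBall x (d + 1)))⁻¹ :=
    ENNReal.inv_pos.mpr (hμfin x (d + 1) (by linarith)).ne
  have h2 : 0 < ν t (Set.Ico d (d + 1)) := by
    rw [hν t ht d (d + 1) hd0.le (by linarith)]
    refine ENNReal.ofReal_pos.mpr (sub_pos.mpr ?_)
    have hσlt : σ d < σ (d + 1) :=
      hσmono (Set.mem_Ici.mpr hd0.le) (Set.mem_Ici.mpr (by linarith)) (by linarith)
    exact Real.rpow_lt_rpow (hσrange d hd0.le).1 hσlt ht
  exact ENNReal.mul_pos h1.ne' h2.ne'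

lemma heatK_anti (μ : Measure X) (ν : ℝ → Measure ℝ) (t : ℝ)
    {x y z : X} (h : dist x y ≤ dist x z) : heatK μ ν t x z ≤ heatK μ ν t x y :=
  lintegral_mono_set (Set.Ici_subset_Ici.mpr h)

end Aux

theorem statement_4
    {X : Type*} [MetricSpace X] [TopologicalSpace.SeparableSpace X]
    [MeasurableSpace X] [BorelSpace X]
    (hd : ∀ x y z : X, dist x z ≤ max (dist x y) (dist y z))
    (hcb : ∀ (x : X) (r : ℝ), IsCompact (closedBall x r))
    (μ : Measure X)
    (hμpos : ∀ (x : X) (r : ℝ), 0 < r → 0 < μ (closedBall x r))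
    (hμfin : ∀ (x : X) (r : ℝ), 0 < r → μ (closedBall x r) < ⊤)
    (σ : ℝ → ℝ)
    (hσmono : StrictMonoOn σ (Set.Ici 0))
    (hσrange : ∀ r : ℝ, 0 ≤ r → σ r ∈ Set.Icc (0:ℝ) 1)
    (hσlc : ∀ r : ℝ, 0 < r → ContinuousWithinAt σ (Set.Iic r) r)
    (hσzero : Tendsto σ (nhdsWithin 0 (Set.Ioi 0)) (nhds 0))
    (hσtop : Tendsto σ atTop (nhds 1))
    (ν : ℝ → Measure ℝ)
    (hν : ∀ t : ℝ, 0 < t → ∀ a b : ℝ, 0 ≤ a → a ≤ b →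
      ν t (Set.Ico a b) = ENNReal.ofReal (σ b ^ t - σ a ^ t))
    (hνneg : ∀ t : ℝ, 0 < t → ν t (Set.Iio 0) = 0)
    (t : ℝ) (ht : 0 < t) (ρ : X → X → ℝ)
    (hρ : ∀ x y : X, ρ x y = if x = y then 0 else ((heatK μ ν t x y).toReal)⁻¹) :
    (∀ x y : X, 0 ≤ ρ x y) ∧
    (∀ x y : X, ρ x y = ρ y x) ∧
    (∀ x y : X, ρ x y = 0 ↔ x = y) ∧
    (∀ x y z : X, ρ x y ≤ max (ρ x z) (ρ z y)) := by

  have hsym : ∀ x y : X, heatK μ ν t x y = heatK μ ν t y x := heatK_symm hd μ ν t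
  have hfin : ∀ x y : X, x ≠ y → heatK μ ν t x y < ⊤ :=
    fun x y h => heatK_lt_top μ hμpos hσrange ht hν h
  have hpos : ∀ x y : X, x ≠ y → 0 < heatK μ ν t x y :=
    fun x y h => heatK_pos μ hμfin hσmono hσrange ht hν h
  have hρpos : ∀ x y : X, x ≠ y → 0 < ρ x y := by
    intro x y h
    rw [hρ x y, if_neg h]
    exact inv_pos.mpr (ENNReal.toReal_pos (hpos x y h).ne' (hfin x y h).ne)
  have hnn : ∀ x y : X, 0 ≤ ρ x y := by
    intro x y
    by_cases h : x = y
    · rw [hρ x y, if_pos h]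
    · exact (hρpos x y h).le
  have hρsym : ∀ x y : X, ρ x y = ρ y x := by
    intro x y
    by_cases h : x = y
    · subst h; rfl
    · rw [hρ x y, hρ y x, if_neg h, if_neg (Ne.symm h), hsym]
  -- key comparison lemma
  have hkey : ∀ x y z : X, x ≠ y → x ≠ z → heatK μ ν t x z ≤ heatK μ ν t x y →
      ρ x y ≤ ρ x z := by
    intro x y z hxy hxz hle
    rw [hρ x y, hρ x z, if_neg hxy, if_neg hxz]
    refine inv_anti₀ (ENNReal.toReal_pos (hpos x z hxz).ne' (hfin x z hxz).ne) ?_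
    exact ENNReal.toReal_le_toReal (hfin x z hxz).ne (hfin x y hxy).ne |>.mpr hle
  refine ⟨hnn, hρsym, ?_, ?_⟩
  · intro x y
    constructor
    · intro h
      by_contra hxy
      exact absurd h (hρpos x y hxy).ne'
    · intro h; subst h; rw [hρ x x, if_pos rfl]
  · intro x y z
    by_cases hxy : x = y
    · subst hxy
      rw [hρ x x, if_pos rfl]
      exact le_max_of_le_left (hnn x z)
    by_cases hzx : z = x
    · subst hzx; rw [hρsym z y]; exact le_max_right _ _
    by_cases hzy : z = y
    · subst hzy; exact le_max_left _ _
    have htri := hd x z y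
    rcases le_max_iff.mp htri with h1 | h1
    · refine le_max_of_le_left (hkey x y z hxy (Ne.symm hzx) (heatK_anti μ ν t h1))
    · rw [hρsym x y, hρsym z y]
      refine le_max_of_le_right (hkey y x z (Ne.symm hxy) (Ne.symm hzy) ?_)
      exact heatK_anti μ ν t (by rw [dist_comm y x, dist_comm y z]; exact h1)
end

section
/- For all x, y ∈ X and t > 0 the heat kernel satisfies: (a) if x ≠ y then p(t,x,y) ≤ (t/d_*(x,y)) · N(x, 1/d_*(x,y)); (b) if x ≠ y then p(t,x,y) ≥ (1/(2e)) · (t/d_*(x,y)) · N(x, 1/(2 d_*(x,y))) whenever t ≤ d_*(x,y), and p(t,x,y) ≥ (1/(2e)) · N(x, 1/(2t)) whenever t ≥ d_*(x,y); (c) p(t,x,x) ≥ (1/e) · N(x, 1/t). -/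
open MeasureTheory Metric Filter
open scoped ENNReal Classical

section Aux

variable {X : Type*} [MetricSpace X] [MeasurableSpace X] {σ : ℝ → ℝ} {ν : ℝ → Measure ℝ}

lemma sigma_zero (hσmono : StrictMonoOn σ (Set.Ici 0))
    (hσrange : ∀ r : ℝ, 0 ≤ r → σ r ∈ Set.Icc (0:ℝ) 1)
    (hσzero : Tendsto σ (nhdsWithin 0 (Set.Ioi 0)) (nhds 0)) : σ 0 = 0 := by
  have h1 : σ 0 ≤ 0 := by
    refine ge_of_tendsto hσzero ?_
    filter_upwards [self_mem_nhdsWithin] with r hr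
    exact (hσmono (Set.mem_Ici.2 le_rfl) (Set.mem_Ici.2 (le_of_lt hr)) hr).le
  exact le_antisymm h1 (hσrange 0 le_rfl).1

lemma sigma_pos (hσmono : StrictMonoOn σ (Set.Ici 0))
    (hσrange : ∀ r : ℝ, 0 ≤ r → σ r ∈ Set.Icc (0:ℝ) 1)
    (hσzero : Tendsto σ (nhdsWithin 0 (Set.Ioi 0)) (nhds 0))
    {r : ℝ} (hr : 0 < r) : 0 < σ r := by
  have := hσmono (Set.mem_Ici.2 le_rfl) (Set.mem_Ici.2 hr.le) hr
  rw [sigma_zero hσmono hσrange hσzero] at this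
  exact this

lemma sigma_lt_one (hσmono : StrictMonoOn σ (Set.Ici 0))
    (hσrange : ∀ r : ℝ, 0 ≤ r → σ r ∈ Set.Icc (0:ℝ) 1)
    {r : ℝ} (hr : 0 ≤ r) : σ r < 1 :=
  lt_of_lt_of_le (hσmono (Set.mem_Ici.2 hr) (Set.mem_Ici.2 (by linarith)) (by linarith))
    (hσrange (r+1) (by linarith)).2

lemma log_inv_pos {r : ℝ} (h0 : 0 < σ r) (h1 : σ r < 1) : 0 < Real.log (1 / σ r) := by
  rw [one_div, Real.log_inv]
  linarith [Real.log_neg h0 h1]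

lemma dstar_pos (hσmono : StrictMonoOn σ (Set.Ici 0))
    (hσrange : ∀ r : ℝ, 0 ≤ r → σ r ∈ Set.Icc (0:ℝ) 1)
    (hσzero : Tendsto σ (nhdsWithin 0 (Set.Ioi 0)) (nhds 0))
    {x y : X} (hxy : x ≠ y) : 0 < dstar σ x y := by
  have hd : 0 < dist x y := dist_pos.2 hxy
  have h0 : 0 < σ (dist x y) := sigma_pos hσmono hσrange hσzero hd
  have h1 : σ (dist x y) < 1 := sigma_lt_one hσmono hσrange hd.le
  rw [dstar, if_neg hxy]
  exact one_div_pos.2 (log_inv_pos h0 h1)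

lemma exp_neg_inv_dstar (hσmono : StrictMonoOn σ (Set.Ici 0))
    (hσrange : ∀ r : ℝ, 0 ≤ r → σ r ∈ Set.Icc (0:ℝ) 1)
    (hσzero : Tendsto σ (nhdsWithin 0 (Set.Ioi 0)) (nhds 0))
    {x y : X} (hxy : x ≠ y) :
    Real.exp (-(1 / dstar σ x y)) = σ (dist x y) := by
  have hd : 0 < dist x y := dist_pos.2 hxy
  have h0 : 0 < σ (dist x y) := sigma_pos hσmono hσrange hσzero hd
  rw [dstar, if_neg hxy, one_div_one_div, one_div, Real.log_inv, neg_neg, Real.exp_log h0]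

lemma dstar_le_dstar_iff (hσmono : StrictMonoOn σ (Set.Ici 0))
    (hσrange : ∀ r : ℝ, 0 ≤ r → σ r ∈ Set.Icc (0:ℝ) 1)
    (hσzero : Tendsto σ (nhdsWithin 0 (Set.Ioi 0)) (nhds 0))
    {x y z : X} (hxy : x ≠ y) :
    dstar σ x z ≤ dstar σ x y ↔ dist x z ≤ dist x y := by
  have hd : 0 < dist x y := dist_pos.2 hxy
  have h0 : 0 < σ (dist x y) := sigma_pos hσmono hσrange hσzero hd
  have h1 : σ (dist x y) < 1 := sigma_lt_one hσmono hσrange hd.le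
  have hLy : 0 < Real.log (1 / σ (dist x y)) := log_inv_pos h0 h1
  by_cases hzx : x = z
  · subst hzx
    simp only [dstar, if_pos rfl, dist_self]
    constructor
    · intro _; exact hd.le
    · intro _; exact (one_div_pos.2 hLy).le.trans (le_of_eq (by rw [if_neg hxy]))
  · have hdz : 0 < dist x z := dist_pos.2 hzx
    have h0z : 0 < σ (dist x z) := sigma_pos hσmono hσrange hσzero hdz
    have h1z : σ (dist x z) < 1 := sigma_lt_one hσmono hσrange hdz.le
    have hLz : 0 < Real.log (1 / σ (dist x z)) := log_inv_pos h0z h1z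
    rw [dstar, dstar, if_neg hxy, if_neg hzx,
      div_le_div_iff_of_pos_left one_pos hLz hLy,
      Real.log_le_log_iff (by positivity) (by positivity),
      div_le_div_iff_of_pos_left one_pos h0 h0z,
      hσmono.le_iff_le (Set.mem_Ici.2 hdz.le) (Set.mem_Ici.2 hd.le)]

lemma starBall_eq_closedBall (hσmono : StrictMonoOn σ (Set.Ici 0))
    (hσrange : ∀ r : ℝ, 0 ≤ r → σ r ∈ Set.Icc (0:ℝ) 1)
    (hσzero : Tendsto σ (nhdsWithin 0 (Set.Ioi 0)) (nhds 0))
    {x y : X} (hxy : x ≠ y) :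
    starBall σ x (dstar σ x y) = closedBall x (dist x y) := by
  ext z
  rw [starBall, Set.mem_setOf_eq, mem_closedBall, dist_comm,
    dstar_le_dstar_iff hσmono hσrange hσzero hxy]

lemma closedBall_subset_starBall (hσmono : StrictMonoOn σ (Set.Ici 0))
    (hσrange : ∀ r : ℝ, 0 ≤ r → σ r ∈ Set.Icc (0:ℝ) 1)
    (hσzero : Tendsto σ (nhdsWithin 0 (Set.Ioi 0)) (nhds 0))
    {x : X} {s ρ : ℝ} (hs : 0 < s)
    (hσρ : σ ρ ≤ Real.exp (-(1 / s))) :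
    closedBall x ρ ⊆ starBall σ x s := by
  intro z hz
  rw [mem_closedBall, dist_comm] at hz
  by_cases hzx : x = z
  · rw [starBall, Set.mem_setOf_eq, dstar, if_pos hzx]; exact hs.le
  · have hdz : 0 < dist x z := dist_pos.2 hzx
    have h0z : 0 < σ (dist x z) := sigma_pos hσmono hσrange hσzero hdz
    have hmono := hσmono.monotoneOn (Set.mem_Ici.2 hdz.le) (Set.mem_Ici.2 (hdz.trans_le hz).le) hz
    have hle : σ (dist x z) ≤ Real.exp (-(1 / s)) := hmono.trans hσρ
    have hL : 1 / s ≤ Real.log (1 / σ (dist x z)) := by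
      have h2 : Real.exp (1 / s) ≤ 1 / σ (dist x z) := by
        rw [Real.exp_neg] at hle
        have h3 := inv_anti₀ h0z hle
        rw [inv_inv] at h3
        rw [one_div (σ (dist x z))]
        exact h3
      calc 1/s = Real.log (Real.exp (1/s)) := (Real.log_exp _).symm
      _ ≤ Real.log (1 / σ (dist x z)) := Real.log_le_log (Real.exp_pos _) h2
    rw [starBall, Set.mem_setOf_eq, dstar, if_neg hzx]
    calc 1 / Real.log (1 / σ (dist x z)) ≤ 1 / (1/s) :=
          one_div_le_one_div_of_le (by positivity) hL
    _ = s := one_div_one_div s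

lemma nu_Ici_le
    (hσrange : ∀ r : ℝ, 0 ≤ r → σ r ∈ Set.Icc (0:ℝ) 1)
    (hν : ∀ t : ℝ, 0 < t → ∀ a b : ℝ, 0 ≤ a → a ≤ b →
      ν t (Set.Ico a b) = ENNReal.ofReal (σ b ^ t - σ a ^ t))
    {t a : ℝ} (ht : 0 < t) (ha : 0 ≤ a) :
    ν t (Set.Ici a) ≤ ENNReal.ofReal (1 - σ a ^ t) := by
  have hU : Set.Ici a = ⋃ n : ℕ, Set.Ico a (a + n) := by
    ext b
    simp only [Set.mem_Ici, Set.mem_iUnion, Set.mem_Ico]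
    constructor
    · intro h
      obtain ⟨n, hn⟩ := exists_nat_gt (b - a)
      exact ⟨n, h, by linarith⟩
    · rintro ⟨n, h1, _⟩; exact h1
  have hmono : Monotone fun n : ℕ => Set.Ico a (a + (n:ℝ)) := fun n m hnm =>
    Set.Ico_subset_Ico_right (by
      have : (n:ℝ) ≤ m := Nat.cast_le.2 hnm
      linarith)
  rw [hU, hmono.measure_iUnion]
  refine iSup_le fun n => ?_
  rw [hν t ht a (a + n) ha (le_add_of_nonneg_right n.cast_nonneg)]
  refine ENNReal.ofReal_le_ofReal ?_
  have h1 : σ (a + n) ^ t ≤ 1 :=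
    Real.rpow_le_one (hσrange _ (by positivity)).1 (hσrange _ (by positivity)).2 ht.le
  linarith

lemma nu_Icc_ge
    (hν : ∀ t : ℝ, 0 < t → ∀ a b : ℝ, 0 ≤ a → a ≤ b →
      ν t (Set.Ico a b) = ENNReal.ofReal (σ b ^ t - σ a ^ t))
    {t a ρ θ : ℝ} (ht : 0 < t) (ha : 0 ≤ a) (haρ : a ≤ ρ) (hθ0 : 0 ≤ θ)
    (hbound : ∀ r, ρ < r → θ ≤ σ r) :
    ENNReal.ofReal (θ ^ t - σ a ^ t) ≤ ν t (Set.Icc a ρ) := by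
  have hI : Set.Icc a ρ = ⋂ n : ℕ, Set.Ico a (ρ + 1/((n:ℝ)+1)) := by
    ext b
    simp only [Set.mem_Icc, Set.mem_iInter, Set.mem_Ico]
    constructor
    · rintro ⟨h1, h2⟩ n
      refine ⟨h1, ?_⟩
      have : (0:ℝ) < 1/((n:ℝ)+1) := by positivity
      linarith
    · intro h
      refine ⟨(h 0).1, ?_⟩
      by_contra hbρ
      push_neg at hbρ
      obtain ⟨n, hn⟩ := exists_nat_one_div_lt (show (0:ℝ) < b - ρ by linarith)
      have := (h n).2
      linarith
  have hanti : Antitone fun n : ℕ => Set.Ico a (ρ + 1/((n:ℝ)+1)) := fun n m hnm =>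
    Set.Ico_subset_Ico_right (by
      have h1 : (n:ℝ) + 1 ≤ (m:ℝ) + 1 := by
        have : (n:ℝ) ≤ m := Nat.cast_le.2 hnm
        linarith
      have := one_div_le_one_div_of_le (by positivity : (0:ℝ) < (n:ℝ)+1) h1
      linarith)
  have hfin : ∃ n : ℕ, ν t (Set.Ico a (ρ + 1/((n:ℝ)+1))) ≠ ∞ := by
    refine ⟨0, ?_⟩
    rw [hν t ht a _ ha (by norm_num; linarith)]
    exact ENNReal.ofReal_ne_top
  have hlim := tendsto_measure_iInter_atTop
    (fun n => measurableSet_Ico.nullMeasurableSet) hanti hfin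
  rw [hI]
  refine ge_of_tendsto hlim (Eventually.of_forall fun n => ?_)
  have hρn : ρ < ρ + 1/((n:ℝ)+1) := by
    have : (0:ℝ) < 1/((n:ℝ)+1) := by positivity
    linarith
  rw [Function.comp_apply, hν t ht a _ ha (by linarith)]
  refine ENNReal.ofReal_le_ofReal ?_
  have := Real.rpow_le_rpow hθ0 (hbound _ hρn) ht.le
  linarith

lemma lb_main (μ : Measure X)
    (hσmono : StrictMonoOn σ (Set.Ici 0))
    (hσrange : ∀ r : ℝ, 0 ≤ r → σ r ∈ Set.Icc (0:ℝ) 1)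
    (hσlc : ∀ r : ℝ, 0 < r → ContinuousWithinAt σ (Set.Iic r) r)
    (hσzero : Tendsto σ (nhdsWithin 0 (Set.Ioi 0)) (nhds 0))
    (hσtop : Tendsto σ atTop (nhds 1))
    (hν : ∀ t : ℝ, 0 < t → ∀ a b : ℝ, 0 ≤ a → a ≤ b →
      ν t (Set.Ico a b) = ENNReal.ofReal (σ b ^ t - σ a ^ t))
    (x : X) {t s a : ℝ} (ht : 0 < t) (hs : 0 < s) (ha : 0 ≤ a)
    (hex : ∃ r, 0 < r ∧ a ≤ r ∧ σ r ≤ Real.exp (-(1/s))) :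
    ENNReal.ofReal (Real.exp (-(1/s)) ^ t - σ a ^ t) * (μ (starBall σ x s))⁻¹
      ≤ ∫⁻ r in Set.Ici a, (μ (closedBall x r))⁻¹ ∂(ν t) := by
  obtain ⟨r₀, hr₀pos, har₀, hσr₀⟩ := hex
  set θ := Real.exp (-(1/s)) with hθ
  have hθpos : 0 < θ := Real.exp_pos _
  have hθlt1 : θ < 1 := by
    rw [hθ, Real.exp_lt_one_iff]
    have : 0 < 1/s := by positivity
    linarith
  set S := {r : ℝ | a ≤ r ∧ σ r ≤ θ} with hS
  have hne : S.Nonempty := ⟨r₀, har₀, hσr₀⟩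
  have hbdd : BddAbove S := by
    obtain ⟨M, hM⟩ := eventually_atTop.1 (hσtop.eventually (eventually_gt_nhds hθlt1))
    refine ⟨M, fun r hr => ?_⟩
    by_contra h
    push_neg at h
    exact absurd hr.2 (not_le.2 (hM r h.le))
  set ρ := sSup S with hρ
  have hρ_r₀ : r₀ ≤ ρ := le_csSup hbdd ⟨har₀, hσr₀⟩
  have hρpos : 0 < ρ := hr₀pos.trans_le hρ_r₀
  have haρ : a ≤ ρ := har₀.trans hρ_r₀
  have hσρ : σ ρ ≤ θ := by
    obtain ⟨u, humono, hulim, humem⟩ := exists_seq_tendsto_sSup hne hbdd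
    have hIic : ∀ n, u n ∈ Set.Iic ρ := fun n => le_csSup hbdd (humem n)
    have h2 : Tendsto u atTop (nhdsWithin ρ (Set.Iic ρ)) :=
      tendsto_nhdsWithin_of_tendsto_nhds_of_eventually_within u hulim
        (Eventually.of_forall hIic)
    have h3 : Tendsto (σ ∘ u) atTop (nhds (σ ρ)) := (hσlc ρ hρpos).tendsto.comp h2
    exact le_of_tendsto h3 (Eventually.of_forall fun n => (humem n).2)
  have hsub : closedBall x ρ ⊆ starBall σ x s :=
    closedBall_subset_starBall hσmono hσrange hσzero hs hσρ
  have hbound : ∀ r, ρ < r → θ ≤ σ r := by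
    intro r hr
    by_contra h
    push_neg at h
    have hrS : r ∈ S := ⟨haρ.trans hr.le, h.le⟩
    exact absurd (le_csSup hbdd hrS) (not_le.2 hr)
  have hν_ge := nu_Icc_ge hν ht ha haρ hθpos.le hbound
  have hmeas : Measurable fun r : ℝ => (μ (closedBall x r))⁻¹ := by
    have : Antitone fun r : ℝ => (μ (closedBall x r))⁻¹ := fun r1 r2 h12 =>
      ENNReal.inv_le_inv' (measure_mono (closedBall_subset_closedBall h12))
    exact this.measurable
  calc ENNReal.ofReal (θ ^ t - σ a ^ t) * (μ (starBall σ x s))⁻¹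
      ≤ ν t (Set.Icc a ρ) * (μ (starBall σ x s))⁻¹ := mul_le_mul_left hν_ge _
    _ = ∫⁻ _ in Set.Icc a ρ, (μ (starBall σ x s))⁻¹ ∂(ν t) := by
        rw [setLIntegral_const, mul_comm]
    _ ≤ ∫⁻ r in Set.Icc a ρ, (μ (closedBall x r))⁻¹ ∂(ν t) := by
        refine setLIntegral_mono hmeas fun r hr => ?_
        exact ENNReal.inv_le_inv'
          (measure_mono ((closedBall_subset_closedBall hr.2).trans hsub))
    _ ≤ ∫⁻ r in Set.Ici a, (μ (closedBall x r))⁻¹ ∂(ν t) :=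
        lintegral_mono_set (fun b hb => hb.1)

lemma num1 {u : ℝ} (hu0 : 0 < u) (hu1 : u ≤ 1) :
    u / (2 * Real.exp 1) ≤ Real.exp (-(u/2)) - Real.exp (-u) := by
  have hE : 0 < Real.exp 1 := Real.exp_pos 1
  have hA : Real.exp (-1) ≤ Real.exp (-u) := Real.exp_le_exp.2 (by linarith)
  have hA' : Real.exp (-1) = (Real.exp 1)⁻¹ := Real.exp_neg 1
  have hB : Real.exp (-u) * Real.exp (u/2) = Real.exp (-(u/2)) := by
    rw [← Real.exp_add]; ring_nf
  have h2 : 1 + u/2 ≤ Real.exp (u/2) := by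
    have := Real.add_one_le_exp (u/2); linarith
  have hApos : 0 < Real.exp (-u) := Real.exp_pos _
  have k1 : Real.exp (-u) * (u/2) ≤ Real.exp (-(u/2)) - Real.exp (-u) := by
    nlinarith [mul_le_mul_of_nonneg_left h2 hApos.le]
  have k2 : Real.exp (-1) * (u/2) ≤ Real.exp (-u) * (u/2) :=
    mul_le_mul_of_nonneg_right hA (by linarith)
  have k3 : u / (2*Real.exp 1) = Real.exp (-1) * (u/2) := by
    rw [hA']; field_simp
  linarith

lemma num2 : 1 / (2 * Real.exp 1) ≤ Real.exp (-(1/2 : ℝ)) - Real.exp (-1 : ℝ) := by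
  have hE : 0 < Real.exp 1 := Real.exp_pos 1
  have hG32 : (3/2 : ℝ) ≤ Real.exp (1/2 : ℝ) := by
    have := Real.add_one_le_exp (1/2 : ℝ); linarith
  have hsplit : Real.exp (-(1/2 : ℝ)) = Real.exp (1/2 : ℝ) * Real.exp (-1 : ℝ) := by
    rw [← Real.exp_add]; norm_num
  have hinv1 : Real.exp (-1 : ℝ) = (Real.exp 1)⁻¹ := Real.exp_neg _
  have h1 : 1 / (2 * Real.exp 1) = (Real.exp 1)⁻¹ * (1/2) := by
    field_simp
  rw [hsplit, h1]
  have hEinv : (0:ℝ) < (Real.exp 1)⁻¹ := by positivity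
  have h2 : (Real.exp 1)⁻¹ * (1/2) ≤ (Real.exp 1)⁻¹ * (Real.exp (1/2:ℝ) - 1) :=
    mul_le_mul_of_nonneg_left (by linarith) hEinv.le
  rw [hinv1]
  nlinarith [h2]

end Aux

theorem statement_9
    {X : Type*} [MetricSpace X] [TopologicalSpace.SeparableSpace X]
    [MeasurableSpace X] [BorelSpace X]
    (hd : ∀ x y z : X, dist x z ≤ max (dist x y) (dist y z))
    (hcb : ∀ (x : X) (r : ℝ), IsCompact (closedBall x r))
    (μ : Measure X)
    (hμpos : ∀ (x : X) (r : ℝ), 0 < r → 0 < μ (closedBall x r))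
    (hμfin : ∀ (x : X) (r : ℝ), 0 < r → μ (closedBall x r) < ⊤)
    (σ : ℝ → ℝ)
    (hσmono : StrictMonoOn σ (Set.Ici 0))
    (hσrange : ∀ r : ℝ, 0 ≤ r → σ r ∈ Set.Icc (0:ℝ) 1)
    (hσlc : ∀ r : ℝ, 0 < r → ContinuousWithinAt σ (Set.Iic r) r)
    (hσzero : Tendsto σ (nhdsWithin 0 (Set.Ioi 0)) (nhds 0))
    (hσtop : Tendsto σ atTop (nhds 1))
    (ν : ℝ → Measure ℝ)
    (hν : ∀ t : ℝ, 0 < t → ∀ a b : ℝ, 0 ≤ a → a ≤ b →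
      ν t (Set.Ico a b) = ENNReal.ofReal (σ b ^ t - σ a ^ t))
    (hνneg : ∀ t : ℝ, 0 < t → ν t (Set.Iio 0) = 0)
    (x y : X) (t : ℝ) (ht : 0 < t) :
    (x ≠ y → heatK μ ν t x y ≤
        ENNReal.ofReal (t / dstar σ x y) * specN μ σ x (1 / dstar σ x y)) ∧
    (x ≠ y → t ≤ dstar σ x y →
        ENNReal.ofReal (1 / (2 * Real.exp 1) * (t / dstar σ x y)) *
            specN μ σ x (1 / (2 * dstar σ x y)) ≤ heatK μ ν t x y) ∧
    (x ≠ y → dstar σ x y ≤ t →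
        ENNReal.ofReal (1 / (2 * Real.exp 1)) * specN μ σ x (1 / (2 * t)) ≤
          heatK μ ν t x y) ∧
    ENNReal.ofReal (1 / Real.exp 1) * specN μ σ x (1 / t) ≤ heatK μ ν t x x := by
  have hσ0 : σ 0 = 0 := sigma_zero hσmono hσrange hσzero
  have htne : t ≠ 0 := ht.ne'
  refine ⟨?_, ?_, ?_, ?_⟩
  · -- part (a), upper bound
    intro hxy
    set s := dstar σ x y with hs
    have hspos : 0 < s := dstar_pos hσmono hσrange hσzero hxy
    have hdd : 0 < dist x y := dist_pos.2 hxy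
    have hσd : σ (dist x y) = Real.exp (-(1/s)) := by
      rw [hs]
      exact (exp_neg_inv_dstar hσmono hσrange hσzero hxy).symm
    have hstar : starBall σ x (1/(1/s)) = closedBall x (dist x y) := by
      rw [one_div_one_div, hs]
      exact starBall_eq_closedBall hσmono hσrange hσzero hxy
    have hub : heatK μ ν t x y ≤
        (μ (closedBall x (dist x y)))⁻¹ * ν t (Set.Ici (dist x y)) := by
      rw [heatK]
      calc ∫⁻ r in Set.Ici (dist x y), (μ (closedBall x r))⁻¹ ∂(ν t)
          ≤ ∫⁻ _ in Set.Ici (dist x y), (μ (closedBall x (dist x y)))⁻¹ ∂(ν t) :=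
            setLIntegral_mono measurable_const fun r hr =>
              ENNReal.inv_le_inv' (measure_mono (closedBall_subset_closedBall hr))
        _ = _ := by rw [setLIntegral_const, mul_comm]
    have hnum : 1 - σ (dist x y) ^ t ≤ t / s := by
      rw [hσd, ← Real.exp_mul]
      have heq : -(1/s)*t = -(t/s) := by ring
      rw [heq]
      have := Real.add_one_le_exp (-(t/s))
      linarith
    calc heatK μ ν t x y
        ≤ (μ (closedBall x (dist x y)))⁻¹ * ν t (Set.Ici (dist x y)) := hub
      _ ≤ (μ (closedBall x (dist x y)))⁻¹ * ENNReal.ofReal (t/s) :=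
          mul_le_mul_right
            ((nu_Ici_le hσrange hν ht hdd.le).trans (ENNReal.ofReal_le_ofReal hnum)) _
      _ = ENNReal.ofReal (t / s) * specN μ σ x (1 / s) := by
          rw [specN, hstar, mul_comm]
  · -- part (b1)
    intro hxy hts
    set s := dstar σ x y with hs
    have hspos : 0 < s := dstar_pos hσmono hσrange hσzero hxy
    have hdd : 0 < dist x y := dist_pos.2 hxy
    have hσd : σ (dist x y) = Real.exp (-(1/s)) := by
      rw [hs]
      exact (exp_neg_inv_dstar hσmono hσrange hσzero hxy).symm
    have h2s : (0:ℝ) < 2*s := by linarith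
    have hex : ∃ r, 0 < r ∧ dist x y ≤ r ∧ σ r ≤ Real.exp (-(1/(2*s))) := by
      refine ⟨dist x y, hdd, le_rfl, ?_⟩
      rw [hσd]
      apply Real.exp_le_exp.2
      have := one_div_le_one_div_of_le hspos (by linarith : s ≤ 2*s)
      linarith
    have key := lb_main μ hσmono hσrange hσlc hσzero hσtop hν x ht h2s dist_nonneg hex
    rw [heatK]
    refine le_trans ?_ key
    simp only [specN, one_div_one_div]
    refine mul_le_mul_left (ENNReal.ofReal_le_ofReal ?_) _
    rw [hσd, ← Real.exp_mul, ← Real.exp_mul]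
    have e1 : -(1/(2*s))*t = -((t/s)/2) := by
      field_simp
    have e2 : -(1/s)*t = -(t/s) := by ring
    rw [e1, e2]
    have hu0 : 0 < t/s := by positivity
    have hu1 : t/s ≤ 1 := by rw [div_le_one hspos]; exact hts
    calc 1/(2*Real.exp 1) * (t/s) = (t/s)/(2*Real.exp 1) := by ring
      _ ≤ _ := num1 hu0 hu1
  · -- part (b2)
    intro hxy hst
    set s := dstar σ x y with hs
    have hspos : 0 < s := dstar_pos hσmono hσrange hσzero hxy
    have hdd : 0 < dist x y := dist_pos.2 hxy
    have hσd : σ (dist x y) = Real.exp (-(1/s)) := by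
      rw [hs]
      exact (exp_neg_inv_dstar hσmono hσrange hσzero hxy).symm
    have h2t : (0:ℝ) < 2*t := by linarith
    have hex : ∃ r, 0 < r ∧ dist x y ≤ r ∧ σ r ≤ Real.exp (-(1/(2*t))) := by
      refine ⟨dist x y, hdd, le_rfl, ?_⟩
      rw [hσd]
      apply Real.exp_le_exp.2
      have := one_div_le_one_div_of_le hspos (by linarith : s ≤ 2*t)
      linarith
    have key := lb_main μ hσmono hσrange hσlc hσzero hσtop hν x ht h2t dist_nonneg hex
    rw [heatK]
    refine le_trans ?_ key
    simp only [specN, one_div_one_div]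
    refine mul_le_mul_left (ENNReal.ofReal_le_ofReal ?_) _
    rw [hσd, ← Real.exp_mul, ← Real.exp_mul]
    have e1 : -(1/(2*t))*t = -(1/2 : ℝ) := by
      field_simp
    have e2 : -(1/s)*t = -(t/s) := by ring
    rw [e1, e2]
    have h3 : Real.exp (-(t/s)) ≤ Real.exp (-1) := by
      apply Real.exp_le_exp.2
      have : (1:ℝ) ≤ t/s := (one_le_div hspos).2 hst
      linarith
    linarith [num2]
  · -- part (c)
    have hθpos : (0:ℝ) < Real.exp (-(1/t)) := Real.exp_pos _
    have hex : ∃ r, 0 < r ∧ (0:ℝ) ≤ r ∧ σ r ≤ Real.exp (-(1/t)) := by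
      have hev : ∀ᶠ r in nhdsWithin 0 (Set.Ioi 0), σ r < Real.exp (-(1/t)) :=
        hσzero.eventually (eventually_lt_nhds hθpos)
      obtain ⟨r₀, hr₁, hr₂⟩ := (hev.and self_mem_nhdsWithin).exists
      exact ⟨r₀, hr₂, hr₂.le, hr₁.le⟩
    have key := lb_main μ hσmono hσrange hσlc hσzero hσtop hν x ht ht le_rfl hex
    rw [heatK, dist_self]
    refine le_trans ?_ key
    simp only [specN, one_div_one_div]
    refine mul_le_mul_left (ENNReal.ofReal_le_ofReal ?_) _
    rw [hσ0, Real.zero_rpow htne, ← Real.exp_mul]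
    have e1 : -(1/t)*t = -1 := by field_simp
    rw [e1, sub_zero, Real.exp_neg, one_div]
end
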